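/- arXiv:2203.05892 — 5 statements merged into one kernel-verified Lean document; each statement's English description precedes it below -/
import Mathlib

section
/- Fix n ∈ ℕ, n ≥ 1, and let r ∈ ℕ with r ≥ n. Then there exist real coefficients g_α for α ∈ ℕ^n_r with g_0 = 1 such that the kernel K_r(x,y) = Σ_{α ∈ ℕ^n_r} 2^{H(α)} g_α T_α(x) T_α(y) is nonnegative for all x, y ∈ [−1,1]^n and Σ_{i=1}^n (1 − g_{e_i}) ≤ n (1 − cos(nπ/(r+n))), where e_i is the i-th standard unit vector. Consequently the minimal resolution σ_r² over such nonnegative kernels satisfies σ_r² ≤ n(1 − cos(nπ/(r+n))) = O(n³/r²). -/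
open MeasureTheory Real Finset

noncomputable section

/-- The Chebyshev (arcsine) measure on ℝ, supported on [-1,1]. -/
def chebMeasure1 : Measure ℝ :=
  (volume.restrict (Set.Icc (-1 : ℝ) 1)).withDensity
    (fun x => ENNReal.ofReal ((π * Real.sqrt (1 - x ^ 2))⁻¹))

/-- The product Chebyshev measure on [-1,1]^n. -/
def chebMeasure (n : ℕ) : Measure (Fin n → ℝ) := Measure.pi fun _ => chebMeasure1

/-- The hypercube [-1,1]^n. -/
def box (n : ℕ) : Set (Fin n → ℝ) := Set.univ.pi fun _ => Set.Icc (-1 : ℝ) 1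

/-- Euclidean norm on ℝ^n. -/
def eNorm {n : ℕ} (x : Fin n → ℝ) : ℝ := Real.sqrt (∑ i, x i ^ 2)

/-- Chebyshev polynomial of the first kind, evaluated. -/
def T1 (k : ℕ) (x : ℝ) : ℝ := (Polynomial.Chebyshev.T ℝ (k : ℤ)).eval x

/-- Multivariate Chebyshev polynomial. -/
def Tm {n : ℕ} (α : Fin n → ℕ) (x : Fin n → ℝ) : ℝ := ∏ i, T1 (α i) (x i)

/-- The set ℕ^n_r of multi-indices of total degree at most r, as a finset. -/
def Nnr (n r : ℕ) : Finset (Fin n → ℕ) :=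
  (Fintype.piFinset fun _ => Finset.range (r + 1)).filter fun α => ∑ i, α i ≤ r

/-- Hamming weight: number of nonzero entries. -/
def ham {n : ℕ} (α : Fin n → ℕ) : ℕ := (Finset.univ.filter fun i => α i ≠ 0).card

/-- Modulus of continuity of `f` on the set `S`, w.r.t. the Euclidean norm. -/
def modCont {n : ℕ} (f : (Fin n → ℝ) → ℝ) (S : Set (Fin n → ℝ)) (δ : ℝ) : ℝ :=
  sSup {t : ℝ | ∃ x ∈ S, ∃ y ∈ S, eNorm (x - y) ≤ δ ∧ t = |f x - f y|}

namespace KRB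

lemma cos_autocorr (u : ℕ → ℝ) (t : ℝ) : ∀ N : ℕ,
    ∑ k ∈ range N, (if k = 0 then (1:ℝ) else 2) *
      (∑ l ∈ range (N - k), u l * u (l + k)) * Real.cos (k * t)
    = (∑ j ∈ range N, u j * Real.cos (j * t)) ^ 2
      + (∑ j ∈ range N, u j * Real.sin (j * t)) ^ 2 := by
  intro N
  induction N with
  | zero => simp
  | succ N ih =>
    have hA : ∀ k ∈ range (N + 1),
        (if k = 0 then (1:ℝ) else 2) * (∑ l ∈ range (N + 1 - k), u l * u (l + k)) * Real.cos (k * t)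
        = (if k = 0 then (1:ℝ) else 2) * (∑ l ∈ range (N - k), u l * u (l + k)) * Real.cos (k * t)
          + (if k = 0 then (1:ℝ) else 2) * (u (N - k) * u N) * Real.cos (k * t) := by
      intro k hk
      rw [mem_range] at hk
      have hk' : k ≤ N := Nat.lt_succ_iff.mp hk
      have h1 : N + 1 - k = (N - k) + 1 := by omega
      have h2 : (N - k) + k = N := by omega
      rw [h1, Finset.sum_range_succ, h2]
      ring
    rw [Finset.sum_congr rfl hA, Finset.sum_add_distrib]
    have e1 : ∑ k ∈ range (N + 1),
        (if k = 0 then (1:ℝ) else 2) * (∑ l ∈ range (N - k), u l * u (l + k)) * Real.cos (k * t)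
        = ∑ k ∈ range N,
        (if k = 0 then (1:ℝ) else 2) * (∑ l ∈ range (N - k), u l * u (l + k)) * Real.cos (k * t) := by
      rw [Finset.sum_range_succ]
      simp
    rw [e1, ih]
    -- second sum
    have e2 : ∑ k ∈ range (N + 1),
        (if k = 0 then (1:ℝ) else 2) * (u (N - k) * u N) * Real.cos (k * t)
        = u N ^ 2 + 2 * u N * ∑ k ∈ range N, u (N - 1 - k) * Real.cos ((k + 1 : ℕ) * t) := by
      rw [Finset.sum_range_succ']
      have this1 : ∀ k ∈ range N,
          (if k + 1 = 0 then (1:ℝ) else 2) * (u (N - (k + 1)) * u N) * Real.cos ((k + 1 : ℕ) * t)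
          = 2 * u N * (u (N - 1 - k) * Real.cos ((k + 1 : ℕ) * t)) := by
        intro k hk
        have : N - (k + 1) = N - 1 - k := by omega
        rw [this, if_neg (Nat.succ_ne_zero k)]
        ring
      have h0 : (if (0:ℕ) = 0 then (1:ℝ) else 2) * (u (N - 0) * u N) * Real.cos ((0:ℕ) * t)
          = u N ^ 2 := by simp [sq]
      rw [Finset.sum_congr rfl this1, h0, Finset.mul_sum]
      ring
    rw [e2]
    -- RHS expansion
    rw [Finset.sum_range_succ, Finset.sum_range_succ]
    have cross : (∑ j ∈ range N, u j * Real.cos (j * t)) * Real.cos (N * t)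
        + (∑ j ∈ range N, u j * Real.sin (j * t)) * Real.sin (N * t)
        = ∑ k ∈ range N, u (N - 1 - k) * Real.cos ((k + 1 : ℕ) * t) := by
      rw [Finset.sum_mul, Finset.sum_mul, ← Finset.sum_add_distrib]
      have : ∀ j ∈ range N,
          u j * Real.cos (j * t) * Real.cos (N * t) + u j * Real.sin (j * t) * Real.sin (N * t)
          = u j * Real.cos ((N : ℝ) * t - j * t) := by
        intro j hj
        rw [Real.cos_sub]; ring
      rw [Finset.sum_congr rfl this]
      rw [← Finset.sum_range_reflect (fun k => u (N - 1 - k) * Real.cos ((k + 1 : ℕ) * t)) N]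
      apply Finset.sum_congr rfl
      intro j hj
      rw [mem_range] at hj
      have h1 : N - 1 - (N - 1 - j) = j := by omega
      rw [h1]
      congr 1
      have h2 : (N - 1 - j) + 1 = N - j := by omega
      rw [h2]
      have h3 : ((N - j : ℕ) : ℝ) = (N : ℝ) - j := by
        have : j ≤ N := hj.le
        push_cast [Nat.cast_sub this]; ring
      rw [h3]; ring
    linear_combination (-2 * u N) * cross - u N ^ 2 * Real.sin_sq_add_cos_sq ((N:ℝ) * t)

def uu (d j : ℕ) : ℝ := Real.sin ((j + 1) * (π / (d + 2)))
def aa (d k : ℕ) : ℝ := ∑ l ∈ range (d + 1 - k), uu d l * uu d (l + k)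
def cc (d k : ℕ) : ℝ := aa d k / aa d 0

lemma theta_pos (d : ℕ) : 0 < π / (d + 2) := by positivity
lemma theta_le (d : ℕ) : π / (d + 2) ≤ π / 2 := by
  apply div_le_div_of_nonneg_left Real.pi_pos.le (by norm_num)
  have : (0:ℝ) ≤ d := Nat.cast_nonneg d
  linarith
lemma theta_lt (d : ℕ) : π / (d + 2) < π := by
  have := Real.pi_pos
  have := theta_le d
  linarith

lemma hpi (d : ℕ) : ((d:ℝ) + 2) * (π / (d + 2)) = π := by
  field_simp

lemma uu_pos (d j : ℕ) (hj : j < d + 1) : 0 < uu d j := by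
  apply Real.sin_pos_of_pos_of_lt_pi
  · positivity
  · have hjd : ((j:ℝ) + 1) < (d:ℝ) + 2 := by
      have : (j:ℝ) < (d:ℝ) + 1 := by exact_mod_cast hj
      linarith
    calc ((j:ℝ) + 1) * (π / (d + 2)) < ((d:ℝ) + 2) * (π / (d + 2)) := by
          apply mul_lt_mul_of_pos_right hjd (theta_pos d)
      _ = π := hpi d

lemma aa0_pos (d : ℕ) : 0 < aa d 0 := by
  unfold aa
  apply Finset.sum_pos
  · intro l hl
    rw [mem_range] at hl
    have h1 := uu_pos d l (by omega)
    have h2 := uu_pos d (l + 0) (by omega)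
    positivity
  · simp

lemma cc0 (d : ℕ) : cc d 0 = 1 := div_self (aa0_pos d).ne'

lemma aa_zero_of_gt (d k : ℕ) (hk : d < k) : aa d k = 0 := by
  unfold aa
  have h : d + 1 - k = 0 := by omega
  rw [h]; simp

lemma cc_zero_of_gt (d k : ℕ) (hk : d < k) : cc d k = 0 := by
  unfold cc; rw [aa_zero_of_gt d k hk, zero_div]

lemma sin_sum (d : ℕ) :
    ∑ l ∈ range d, Real.sin (2 * (((l:ℝ) + 1) * (π / (d + 2))))
      = 2 * Real.sin (π / (d + 2)) * Real.cos (π / (d + 2)) := by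
  set θ := π / (d + 2) with hθ
  have hspos : 0 < Real.sin θ := Real.sin_pos_of_pos_of_lt_pi (theta_pos d) (theta_lt d)
  have key : 2 * Real.sin θ * ∑ l ∈ range d, Real.sin (2 * (((l:ℝ) + 1) * θ))
      = Real.cos θ - Real.cos ((2 * (d:ℝ) + 1) * θ) := by
    rw [Finset.mul_sum]
    have e : ∀ l ∈ range d, 2 * Real.sin θ * Real.sin (2 * (((l:ℝ) + 1) * θ))
        = (fun m : ℕ => Real.cos ((2 * (m:ℝ) + 1) * θ)) l
          - (fun m : ℕ => Real.cos ((2 * (m:ℝ) + 1) * θ)) (l + 1) := by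
      intro l hl
      simp only [Nat.cast_add, Nat.cast_one]
      rw [show (2 * (l:ℝ) + 1) * θ = 2 * (((l:ℝ) + 1) * θ) - θ by ring,
          show (2 * ((l:ℝ) + 1) + 1) * θ = 2 * (((l:ℝ) + 1) * θ) + θ by ring,
          Real.cos_sub, Real.cos_add]
      ring
    rw [Finset.sum_congr rfl e,
        Finset.sum_range_sub' (fun m : ℕ => Real.cos ((2 * (m:ℝ) + 1) * θ)) d]
    norm_num
  have hcd : Real.cos ((2 * (d:ℝ) + 1) * θ) = Real.cos (3 * θ) := by
    have h1 : (2 * (d:ℝ) + 1) * θ = 2 * π - 3 * θ := by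
      have h := hpi d
      rw [← hθ] at h
      linear_combination 2 * h
    rw [h1, Real.cos_sub, Real.cos_two_pi, Real.sin_two_pi]
    ring
  rw [hcd] at key
  apply mul_left_cancel₀ (ne_of_gt (by positivity : (0:ℝ) < 2 * Real.sin θ))
  rw [key, Real.cos_three_mul]
  have hsq := Real.sin_sq θ
  linear_combination (-4 * Real.cos θ) * hsq

lemma aa1 (d : ℕ) : aa d 1 = Real.cos (π / (d + 2)) * aa d 0 := by
  set θ := π / (d + 2) with hθ
  have hud : uu d d = Real.sin θ := by
    unfold uu
    rw [show ((d:ℝ) + 1) * θ = π - θ by linear_combination hpi d, Real.sin_pi_sub]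
  have ha0 : aa d 0 = (∑ l ∈ range d, uu d l ^ 2) + Real.sin θ ^ 2 := by
    unfold aa
    simp only [Nat.sub_zero, add_zero]
    rw [Finset.sum_range_succ, hud]
    simp [sq]
  have ha1 : aa d 1 = Real.cos θ * (∑ l ∈ range d, uu d l ^ 2)
      + (Real.sin θ / 2) * ∑ l ∈ range d, Real.sin (2 * (((l:ℝ) + 1) * θ)) := by
    unfold aa
    simp only [Nat.add_sub_cancel]
    rw [Finset.mul_sum, Finset.mul_sum, ← Finset.sum_add_distrib]
    apply Finset.sum_congr rfl
    intro l hl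
    unfold uu
    push_cast
    rw [show ((l:ℝ) + 1 + 1) * θ = ((l:ℝ) + 1) * θ + θ by ring, Real.sin_add,
        Real.sin_two_mul]
    ring
  rw [ha1, sin_sum d, ha0]
  ring

lemma cc1 (d : ℕ) : cc d 1 = Real.cos (π / (d + 2)) := by
  unfold cc
  rw [aa1 d, mul_div_assoc, div_self (aa0_pos d).ne', mul_one]

lemma oneD_cos (d : ℕ) (θ φ : ℝ) :
    0 ≤ ∑ k ∈ range (d + 1), (if k = 0 then (1:ℝ) else 2) * cc d k *
      (Real.cos (k * θ) * Real.cos (k * φ)) := by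
  have hpos : (0:ℝ) < 2 * aa d 0 := by have := aa0_pos d; linarith
  have h2 : ∑ k ∈ range (d + 1), (if k = 0 then (1:ℝ) else 2) * cc d k *
      (Real.cos (k * θ) * Real.cos (k * φ))
      = (((∑ j ∈ range (d+1), uu d j * Real.cos (j * (θ - φ))) ^ 2
          + (∑ j ∈ range (d+1), uu d j * Real.sin (j * (θ - φ))) ^ 2)
        + ((∑ j ∈ range (d+1), uu d j * Real.cos (j * (θ + φ))) ^ 2
          + (∑ j ∈ range (d+1), uu d j * Real.sin (j * (θ + φ))) ^ 2))
        / (2 * aa d 0) := by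
    rw [eq_div_iff hpos.ne']
    rw [← cos_autocorr (uu d) (θ - φ) (d + 1), ← cos_autocorr (uu d) (θ + φ) (d + 1)]
    rw [Finset.sum_mul, ← Finset.sum_add_distrib]
    apply Finset.sum_congr rfl
    intro k hk
    have hck : cc d k * aa d 0 = aa d k := by
      unfold cc; exact div_mul_cancel₀ _ (aa0_pos d).ne'
    have hαβ : Real.cos ((k:ℝ) * (θ - φ)) + Real.cos ((k:ℝ) * (θ + φ))
        = 2 * Real.cos (k * θ) * Real.cos (k * φ) := by
      rw [show (k:ℝ) * (θ - φ) = k * θ - k * φ by ring,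
          show (k:ℝ) * (θ + φ) = k * θ + k * φ by ring,
          Real.cos_sub, Real.cos_add]
      ring
    have haa : aa d k = ∑ l ∈ range (d + 1 - k), uu d l * uu d (l + k) := rfl
    rw [← haa]
    linear_combination (-(if k = 0 then (1:ℝ) else 2) * aa d k) * hαβ
      + (2 * (if k = 0 then (1:ℝ) else 2) * (Real.cos (k * θ) * Real.cos (k * φ))) * hck
  rw [h2]
  positivity

lemma oneD (d : ℕ) (x y : ℝ) (hx : x ∈ Set.Icc (-1:ℝ) 1) (hy : y ∈ Set.Icc (-1:ℝ) 1) :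
    0 ≤ ∑ k ∈ range (d + 1), (if k = 0 then (1:ℝ) else 2) * cc d k *
      ((Polynomial.Chebyshev.T ℝ (k : ℤ)).eval x * (Polynomial.Chebyshev.T ℝ (k : ℤ)).eval y) := by
  have hT : ∀ (k : ℕ) (z : ℝ), z ∈ Set.Icc (-1:ℝ) 1 →
      (Polynomial.Chebyshev.T ℝ (k : ℤ)).eval z = Real.cos (k * Real.arccos z) := by
    intro k z hz
    conv_lhs => rw [← Real.cos_arccos hz.1 hz.2]
    rw [Polynomial.Chebyshev.T_real_cos]
    push_cast
    ring_nf
  have := oneD_cos d (Real.arccos x) (Real.arccos y)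
  calc (0:ℝ) ≤ _ := this
    _ = _ := by
      apply Finset.sum_congr rfl
      intro k hk
      rw [hT k x hx, hT k y hy]


end KRB

open KRB in
/-- For r ≥ n there exist coefficients `g` with `g 0 = 1` whose kernel
is nonnegative on the hypercube and whose squared resolution Σᵢ (1 − g_{eᵢ}) is at most
n(1 − cos(nπ/(r+n))). -/
theorem exists_kernel_resolution_bound (n r : ℕ) (hn : 1 ≤ n) (hr : n ≤ r) :
    ∃ g : (Fin n → ℕ) → ℝ, g 0 = 1 ∧
      (∀ x ∈ box n, ∀ y ∈ box n,
        0 ≤ ∑ α ∈ Nnr n r, (2 : ℝ) ^ ham α * g α * Tm α x * Tm α y) ∧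
      ∑ i : Fin n, (1 - g (Pi.single i 1)) ≤
        n * (1 - Real.cos (n * π / (r + n))) := by
  set d := r / n with hd
  have hnd : n * d ≤ r := Nat.mul_div_le r n
  have hrnd : r < n * d + n := by
    show r < n * (r / n) + n
    have h1 : n * (r / n) + r % n = r := Nat.div_add_mod r n
    have h2 : r % n < n := Nat.mod_lt r (by omega)
    omega
  refine ⟨fun α => ∏ i, cc d (α i), ?_, ?_, ?_⟩
  · simp [cc0]
  · intro x hx y hy
    have hxi : ∀ i, x i ∈ Set.Icc (-1:ℝ) 1 := by
      intro i; exact hx i (Set.mem_univ i)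
    have hyi : ∀ i, y i ∈ Set.Icc (-1:ℝ) 1 := by
      intro i; exact hy i (Set.mem_univ i)
    have hterm : ∀ α : Fin n → ℕ,
        (2 : ℝ) ^ ham α * (∏ i, cc d (α i)) * Tm α x * Tm α y
        = ∏ i, ((if α i = 0 then (1:ℝ) else 2) * cc d (α i) *
            (T1 (α i) (x i) * T1 (α i) (y i))) := by
      intro α
      have hham : (2 : ℝ) ^ ham α = ∏ i, (if α i = 0 then (1:ℝ) else 2) := by
        unfold ham
        rw [← Finset.prod_const, Finset.prod_filter]
        apply Finset.prod_congr rfl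
        intro i _
        by_cases h : α i = 0 <;> simp [h]
      rw [hham, Tm, Tm]
      rw [← Finset.prod_mul_distrib, ← Finset.prod_mul_distrib, ← Finset.prod_mul_distrib]
      apply Finset.prod_congr rfl
      intro i _
      ring
    rw [Finset.sum_congr rfl (fun α _ => hterm α)]
    have hsub : Fintype.piFinset (fun _ : Fin n => Finset.range (d + 1)) ⊆ Nnr n r := by
      intro α hα
      rw [Fintype.mem_piFinset] at hα
      unfold Nnr
      rw [Finset.mem_filter, Fintype.mem_piFinset]
      constructor
      · intro i
        rw [Finset.mem_range] at *
        have := hα i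
        rw [Finset.mem_range] at this
        have : α i ≤ d := by omega
        have hdr : d ≤ r := Nat.div_le_self r n
        omega
      · calc ∑ i, α i ≤ ∑ _i : Fin n, d := by
              apply Finset.sum_le_sum
              intro i _
              have := hα i
              rw [Finset.mem_range] at this
              omega
          _ = n * d := by rw [Finset.sum_const, Finset.card_univ, Fintype.card_fin, smul_eq_mul]
          _ ≤ r := hnd
    rw [← Finset.sum_subset hsub ?_]
    · rw [← Finset.prod_univ_sum (fun _ : Fin n => Finset.range (d + 1))
        (fun i k => (if k = 0 then (1:ℝ) else 2) * cc d k * (T1 k (x i) * T1 k (y i)))]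
      apply Finset.prod_nonneg
      intro i _
      have := oneD d (x i) (y i) (hxi i) (hyi i)
      simpa [T1] using this
    · intro α hα hα'
      rw [Fintype.mem_piFinset] at hα'
      push_neg at hα'
      obtain ⟨i, hi⟩ := hα'
      rw [Finset.mem_range, not_lt] at hi
      apply Finset.prod_eq_zero (Finset.mem_univ i)
      rw [cc_zero_of_gt d (α i) (by omega)]
      ring
  · have hg1 : ∀ i : Fin n, (∏ j, cc d ((Pi.single i 1 : Fin n → ℕ) j)) = Real.cos (π / (d + 2)) := by
      intro i
      rw [Finset.prod_eq_single i]
      · rw [Pi.single_eq_same, cc1]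
      · intro j _ hj
        rw [Pi.single_eq_of_ne hj, cc0]
      · intro h; exact absurd (Finset.mem_univ i) h
    have hcos : Real.cos ((n:ℝ) * π / (r + n)) ≤ Real.cos (π / (d + 2)) := by
      apply Real.cos_le_cos_of_nonneg_of_le_pi
      · positivity
      · rw [div_le_iff₀ (by positivity : (0:ℝ) < (r:ℝ) + n)]
        have : (n:ℝ) ≤ (r:ℝ) + n := by
          have : (0:ℝ) ≤ r := Nat.cast_nonneg r
          linarith
        nlinarith [Real.pi_pos]
      · rw [div_le_div_iff₀ (by positivity) (by positivity : (0:ℝ) < (r:ℝ) + n)]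
        have h1 : (r:ℝ) + n ≤ n * ((d:ℝ) + 2) := by
          have : (r:ℝ) < n * d + n := by exact_mod_cast hrnd
          push_cast
          nlinarith
        nlinarith [Real.pi_pos]
    calc ∑ i : Fin n, (1 - ∏ j, cc d ((Pi.single i 1 : Fin n → ℕ) j))
        = ∑ _i : Fin n, (1 - Real.cos (π / (d + 2))) := by
          apply Finset.sum_congr rfl
          intro i _
          rw [hg1 i]
      _ = n * (1 - Real.cos (π / (d + 2))) := by
          rw [Finset.sum_const, Finset.card_univ, Fintype.card_fin, nsmul_eq_mul]
      _ ≤ n * (1 - Real.cos ((n:ℝ) * π / (r + n))) := by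
          apply mul_le_mul_of_nonneg_left _ (Nat.cast_nonneg n)
          linarith [hcos]
end
end

section
/- For every r ∈ ℕ, the minimum of Σ_{k=0}^r a_k² − Σ_{k=0}^{r−1} a_k a_{k+1} over all a = (a_0, …, a_r) ∈ ℝ^{r+1} with Σ_{k=0}^r a_k² = 1 equals 1 − cos(π/(r+2)). In particular, for every unit vector a ∈ ℝ^{r+1} one has Σ_{k=0}^{r−1} a_k a_{k+1} ≤ cos(π/(r+2)), and this bound is attained. -/
open MeasureTheory Real Finset

noncomputable section

private lemma jrec (A θ : ℝ) :
    Real.sin (A + θ) + Real.sin (A - θ) = 2 * Real.sin A * Real.cos θ := by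
  rw [Real.sin_add, Real.sin_sub]; ring

/-- The minimum of Σ aₖ² − Σ aₖaₖ₊₁ over unit vectors (a₀,…,a_r)
equals 1 − cos(π/(r+2)); equivalently Σ aₖaₖ₊₁ ≤ cos(π/(r+2)) with equality attained. -/
theorem jackson_optimization_value (r : ℕ) :
    IsLeast
      {t : ℝ | ∃ a : ℕ → ℝ, (∑ k ∈ Finset.range (r + 1), a k ^ 2) = 1 ∧
        t = (∑ k ∈ Finset.range (r + 1), a k ^ 2)
          - ∑ k ∈ Finset.range r, a k * a (k + 1)}
      (1 - Real.cos (π / (r + 2))) := by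
  set θ : ℝ := π / (r + 2) with hθdef
  have hr2 : (0:ℝ) < (r:ℝ) + 2 := by positivity
  have hθpos : 0 < θ := div_pos Real.pi_pos hr2
  set s : ℕ → ℝ := fun k => Real.sin (k * θ) with hsdef
  have hs0 : s 0 = 0 := by simp [hsdef]
  have hpi : ((r:ℝ) + 2) * θ = π := by rw [hθdef]; field_simp
  have hstop : s (r + 2) = 0 := by
    simp only [hsdef]; push_cast; rw [hpi, Real.sin_pi]
  have hspos : ∀ k : ℕ, 1 ≤ k → k ≤ r + 1 → 0 < s k := by
    intro k hk1 hk2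
    apply Real.sin_pos_of_pos_of_lt_pi
    · have : (0:ℝ) < (k:ℝ) := by exact_mod_cast hk1
      positivity
    · have h1 : (k : ℝ) < (r : ℝ) + 2 := by exact_mod_cast Nat.lt_succ_of_le (by omega)
      calc (k:ℝ) * θ < ((r:ℝ)+2) * θ := mul_lt_mul_of_pos_right h1 hθpos
        _ = π := hpi
  have hrec : ∀ m : ℕ, s (m + 2) + s m = 2 * s (m + 1) * Real.cos θ := by
    intro m
    have h1 : ((m + 2 : ℕ) : ℝ) * θ = ((m:ℝ)+1)*θ + θ := by push_cast; ring
    have h2 : ((m : ℕ) : ℝ) * θ = ((m:ℝ)+1)*θ - θ := by ring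
    have h3 : ((m + 1 : ℕ) : ℝ) * θ = ((m:ℝ)+1)*θ := by push_cast; ring
    simp only [hsdef]
    rw [h1, h2, h3]
    exact jrec _ _
  -- identity for the extremal vector
  have hident : ∀ m : ℕ,
      Real.cos θ * (∑ k ∈ Finset.range (m+1), s (k+1) ^ 2)
        = (∑ k ∈ Finset.range m, s (k+1) * s (k+2)) + s (m+1) * s (m+2) / 2 := by
    intro m
    induction m with
    | zero =>
      have h2 : s 2 = 2 * s 1 * Real.cos θ := by
        have := hrec 0; rw [hs0] at this; linarith
      simp only [Finset.range_one, Finset.sum_singleton, Finset.range_zero,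
        Finset.sum_empty, zero_add]
      rw [h2]; ring
    | succ n ih =>
      rw [Finset.sum_range_succ (fun k => s (k+1) ^ 2) (n+1),
        Finset.sum_range_succ (fun k => s (k+1) * s (k+2)) n]
      have h := hrec (n+1)
      simp only [show n+1+1 = n+2 from rfl, show n+1+2 = n+3 from rfl] at h ⊢
      linear_combination ih - s (n+2) / 2 * h
  -- lower bound
  have hlb : ∀ a : ℕ → ℝ, ∀ m : ℕ, m ≤ r →
      s (m+2) / s (m+1) * a m ^ 2 + 2 * (∑ k ∈ Finset.range m, a k * a (k+1))
        ≤ 2 * Real.cos θ * (∑ k ∈ Finset.range (m+1), a k ^ 2) := by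
    intro a m
    induction m with
    | zero =>
      intro _
      have hp : 0 < s 1 := hspos 1 le_rfl (by omega)
      have h2 : s 2 = 2 * s 1 * Real.cos θ := by
        have := hrec 0; rw [hs0] at this; linarith
      have h4 : s 2 / s 1 = 2 * Real.cos θ := by
        rw [h2]; field_simp
      simp only [Finset.range_zero, Finset.sum_empty, mul_zero, add_zero,
        zero_add, Finset.sum_range_one]
      rw [h4]
    | succ n ih =>
      intro h
      have hn : n ≤ r := by omega
      have ih' := ih hn
      have hp : 0 < s (n+1) := hspos (n+1) (by omega) (by omega)
      have hq : 0 < s (n+2) := hspos (n+2) (by omega) (by omega)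
      have h3 : s (n+3) = 2 * s (n+2) * Real.cos θ - s (n+1) := by
        have := hrec (n+1); linarith
      rw [Finset.sum_range_succ (fun k => a k * a (k+1)) n,
        Finset.sum_range_succ (fun k => a k ^ 2) (n+1)]
      have key : s (n+3) / s (n+2) * a (n+1) ^ 2 + 2 * (a n * a (n+1))
          ≤ s (n+2) / s (n+1) * a n ^ 2 + 2 * Real.cos θ * a (n+1) ^ 2 := by
        have hnn := div_nonneg (sq_nonneg (s (n+2) * a n - s (n+1) * a (n+1)))
          (le_of_lt (mul_pos hp hq))
        have heq : s (n+2) / s (n+1) * a n ^ 2 + 2 * Real.cos θ * a (n+1) ^ 2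
            - (s (n+3) / s (n+2) * a (n+1) ^ 2 + 2 * (a n * a (n+1)))
            = (s (n+2) * a n - s (n+1) * a (n+1)) ^ 2 / (s (n+1) * s (n+2)) := by
          rw [h3]; field_simp; ring
        linarith [heq ▸ hnn]
      have key' : s (n+1+2) / s (n+1+1) * a (n+1) ^ 2 + 2 * (a n * a (n+1))
          ≤ s (n+2) / s (n+1) * a n ^ 2 + 2 * Real.cos θ * a (n+1) ^ 2 := key
      linarith
  constructor
  · -- membership: the extremal vector
    have hSpos : 0 < ∑ k ∈ Finset.range (r+1), s (k+1) ^ 2 := by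
      apply Finset.sum_pos
      · intro k hk
        simp only [Finset.mem_range] at hk
        have := hspos (k+1) (by omega) (by omega)
        positivity
      · exact ⟨0, by simp⟩
    set S := ∑ k ∈ Finset.range (r+1), s (k+1) ^ 2 with hSdef
    have hsq : Real.sqrt S * Real.sqrt S = S := Real.mul_self_sqrt hSpos.le
    have h1 : (∑ k ∈ Finset.range (r+1), (s (k+1) / Real.sqrt S) ^ 2) = 1 := by
      have hb : ∀ k ∈ Finset.range (r+1),
          (s (k+1) / Real.sqrt S) ^ 2 = s (k+1) ^ 2 / S := by
        intro k _; rw [div_pow, Real.sq_sqrt hSpos.le]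
      rw [Finset.sum_congr rfl hb, ← Finset.sum_div, ← hSdef, div_self hSpos.ne']
    have h4 : (∑ k ∈ Finset.range r, s (k+1) * s (k+2)) = Real.cos θ * S := by
      have h3 := hident r
      rw [hstop] at h3
      rw [← hSdef] at h3
      linarith
    have h2 : (∑ k ∈ Finset.range r, s (k+1) / Real.sqrt S * (s (k+2) / Real.sqrt S))
        = Real.cos θ := by
      have hb : ∀ k ∈ Finset.range r,
          s (k+1) / Real.sqrt S * (s (k+2) / Real.sqrt S) = s (k+1) * s (k+2) / S := by
        intro k _; rw [div_mul_div_comm, hsq]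
      rw [Finset.sum_congr rfl hb, ← Finset.sum_div, h4, mul_div_assoc,
        div_self hSpos.ne', mul_one]
    refine ⟨fun k => s (k+1) / Real.sqrt S, h1, ?_⟩
    have h2' : (∑ k ∈ Finset.range r, s (k+1) / Real.sqrt S * (s (k+1+1) / Real.sqrt S))
        = Real.cos θ := h2
    rw [h1, h2']
  · -- lower bound
    rintro t ⟨a, ha1, hat⟩
    have hb := hlb a r le_rfl
    rw [hstop, ha1] at hb
    rw [hat, ha1]
    have : (∑ k ∈ Finset.range r, a k * a (k+1)) ≤ Real.cos θ := by
      rw [zero_div, zero_mul, zero_add, mul_one] at hb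
      linarith
    linarith
end
end

section
/- For r ∈ ℕ define the coefficients g_{k,r}^{KPM} = [(r−k+2) cos(πk/(r+2)) + sin(πk/(r+2)) cot(π/(r+2))]/(r+2) for 0 ≤ k ≤ r. Then g_{0,r}^{KPM} = 1, g_{1,r}^{KPM} = cos(π/(r+2)) (so the resolution satisfies σ_r² = g_{0,r}^{KPM} − g_{1,r}^{KPM} = 1 − cos(π/(r+2))), and the kernel K_r^{KPM}(x,y) = 1 + 2 Σ_{k=1}^r g_{k,r}^{KPM} T_k(x) T_k(y) is nonnegative for all x, y ∈ [−1,1]. -/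
open MeasureTheory Real Finset

noncomputable section

lemma tel_cos (s c : ℝ) (M : ℕ) :
    ∑ m ∈ Finset.range M, 2 * Real.sin s * Real.cos ((2*(m:ℝ)+c)*s)
      = Real.sin ((2*(M:ℝ)+c-1)*s) - Real.sin ((c-1)*s) := by
  induction M with
  | zero => simp
  | succ M ih =>
    rw [Finset.sum_range_succ, ih]
    push_cast
    have h := Real.sin_sub_sin ((2*((M:ℝ)+1)+c-1)*s) ((2*(M:ℝ)+c-1)*s)
    have e1 : ((2*((M:ℝ)+1)+c-1)*s - (2*(M:ℝ)+c-1)*s)/2 = s := by ring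
    have e2 : ((2*((M:ℝ)+1)+c-1)*s + (2*(M:ℝ)+c-1)*s)/2 = (2*(M:ℝ)+c)*s := by ring
    rw [e1, e2] at h
    linarith

lemma prodsum (s k : ℝ) (M : ℕ) :
    ∑ m ∈ Finset.range M,
      (4 * Real.sin s) * (Real.sin (((m:ℝ)+1)*s) * Real.sin (((m:ℝ)+1+k)*s))
    = 2*(M:ℝ)*Real.sin s*Real.cos (k*s) + Real.sin ((k+1)*s)
        - Real.sin ((2*(M:ℝ)+k+1)*s) := by
  have step : ∀ m ∈ Finset.range M,
      (4 * Real.sin s) * (Real.sin (((m:ℝ)+1)*s) * Real.sin (((m:ℝ)+1+k)*s))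
      = 2*Real.sin s*Real.cos (k*s) - 2 * Real.sin s * Real.cos ((2*(m:ℝ)+(k+2))*s) := by
    intro m _
    have h := Real.cos_sub_cos (k*s) ((2*(m:ℝ)+(k+2))*s)
    have e1 : (k*s + (2*(m:ℝ)+(k+2))*s)/2 = ((m:ℝ)+1+k)*s := by ring
    have e2 : (k*s - (2*(m:ℝ)+(k+2))*s)/2 = -(((m:ℝ)+1)*s) := by ring
    rw [e1, e2, Real.sin_neg] at h
    linear_combination (-2*Real.sin s) * h
  rw [Finset.sum_congr rfl step, Finset.sum_sub_distrib, Finset.sum_const,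
    Finset.card_range, nsmul_eq_mul, tel_cos s (k+2) M]
  have e3 : (2*(M:ℝ)+(k+2)-1) = (2*(M:ℝ)+k+1) := by ring
  have e4 : (k+2-1 : ℝ) = k+1 := by ring
  rw [e3, e4]; ring

lemma sq_expand (n : ℕ) (b : ℕ → ℝ) (t : ℝ) :
    (∑ m ∈ Finset.range n, b m * Real.cos (m*t))^2
      + (∑ m ∈ Finset.range n, b m * Real.sin (m*t))^2
    = ∑ m ∈ Finset.range n, (b m)^2
      + 2 * ∑ k ∈ Finset.Icc 1 (n-1),
          (∑ m ∈ Finset.range (n-k), b m * b (m+k)) * Real.cos (k*t) := by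
  set F : ℕ × ℕ → ℝ := fun p => b p.1 * b p.2 * Real.cos ((p.1:ℝ)*t - (p.2:ℝ)*t) with hF
  have hsymm : ∀ p : ℕ × ℕ, F (p.2, p.1) = F p := by
    intro p
    simp only [hF]
    rw [show (p.2:ℝ)*t - (p.1:ℝ)*t = -((p.1:ℝ)*t - (p.2:ℝ)*t) by ring, Real.cos_neg]
    ring
  have hA : (∑ m ∈ Finset.range n, b m * Real.cos (m*t))^2
      + (∑ m ∈ Finset.range n, b m * Real.sin (m*t))^2
      = ∑ p ∈ Finset.range n ×ˢ Finset.range n, F p := by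
    rw [Finset.sum_product, sq, sq, Finset.sum_mul_sum, Finset.sum_mul_sum,
      ← Finset.sum_add_distrib]
    refine Finset.sum_congr rfl fun m _ => ?_
    rw [← Finset.sum_add_distrib]
    refine Finset.sum_congr rfl fun m' _ => ?_
    simp only [hF]
    rw [Real.cos_sub]
    ring
  rw [hA, ← Finset.sum_filter_add_sum_filter_not (Finset.range n ×ˢ Finset.range n)
    (fun p => p.1 = p.2) F,
    ← Finset.sum_filter_add_sum_filter_not
      ((Finset.range n ×ˢ Finset.range n).filter (fun p => ¬ p.1 = p.2))
      (fun p => p.2 < p.1) F]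
  have hdiag : ∑ p ∈ (Finset.range n ×ˢ Finset.range n).filter (fun p => p.1 = p.2), F p
      = ∑ m ∈ Finset.range n, (b m)^2 := by
    refine Finset.sum_nbij' (fun p => p.1) (fun m => (m, m)) ?_ ?_ ?_ ?_ ?_
    · intro p hp; simp only [Finset.mem_filter, Finset.mem_product] at hp
      exact Finset.mem_range.mpr (Finset.mem_range.mp hp.1.1)
    · intro m hm; simp only [Finset.mem_filter, Finset.mem_product]; simp_all
    · intro p hp; simp only [Finset.mem_filter] at hp
      exact Prod.ext rfl hp.2
    · intro m _; rfl
    · intro p hp; simp only [Finset.mem_filter] at hp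
      simp only [hF, ← hp.2]; rw [sub_self, Real.cos_zero]; ring
  have hswap : ∑ p ∈ ((Finset.range n ×ˢ Finset.range n).filter
        (fun p => ¬ p.1 = p.2)).filter (fun p => ¬ p.2 < p.1), F p
      = ∑ p ∈ ((Finset.range n ×ˢ Finset.range n).filter
        (fun p => ¬ p.1 = p.2)).filter (fun p => p.2 < p.1), F p := by
    refine Finset.sum_nbij' (fun p => (p.2, p.1)) (fun p => (p.2, p.1)) ?_ ?_ ?_ ?_ ?_
    · intro p hp
      simp only [Finset.mem_filter, Finset.mem_product, Finset.mem_range] at hp ⊢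
      omega
    · intro p hp
      simp only [Finset.mem_filter, Finset.mem_product, Finset.mem_range] at hp ⊢
      omega
    · intro p _; simp
    · intro p _; simp
    · intro p _; exact (hsymm p).symm
  have hlower : ∑ p ∈ ((Finset.range n ×ˢ Finset.range n).filter
        (fun p => ¬ p.1 = p.2)).filter (fun p => p.2 < p.1), F p
      = ∑ k ∈ Finset.Icc 1 (n-1),
          (∑ m ∈ Finset.range (n-k), b m * b (m+k)) * Real.cos (k*t) := by
    have hr : ∀ k ∈ Finset.Icc 1 (n-1),
        (∑ m ∈ Finset.range (n-k), b m * b (m+k)) * Real.cos ((k:ℝ)*t)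
        = ∑ m ∈ Finset.range (n-k), F (m+k, m) := by
      intro k _
      rw [Finset.sum_mul]
      refine Finset.sum_congr rfl fun m _ => ?_
      simp only [hF]
      rw [show ((m+k : ℕ):ℝ)*t - (m:ℝ)*t = (k:ℝ)*t by push_cast; ring]
      ring
    rw [Finset.sum_congr rfl hr, ← Finset.sum_sigma (Finset.Icc 1 (n-1))
      (fun k => Finset.range (n-k)) (fun q => F (q.2 + q.1, q.2))]
    refine Finset.sum_nbij' (fun p => ⟨p.1 - p.2, p.2⟩) (fun q => (q.2 + q.1, q.2))
      ?_ ?_ ?_ ?_ ?_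
    · intro p hp
      simp only [Finset.mem_filter, Finset.mem_product, Finset.mem_range] at hp
      simp only [Finset.mem_sigma, Finset.mem_Icc, Finset.mem_range]
      omega
    · intro q hq
      simp only [Finset.mem_sigma, Finset.mem_Icc, Finset.mem_range] at hq
      simp only [Finset.mem_filter, Finset.mem_product, Finset.mem_range]
      omega
    · intro p hp
      simp only [Finset.mem_filter, Finset.mem_product, Finset.mem_range] at hp
      ext <;> simp <;> omega
    · intro q hq; simp
    · intro p hp
      simp only [Finset.mem_filter, Finset.mem_product, Finset.mem_range] at hp
      have h1 : p.2 + (p.1 - p.2) = p.1 := by omega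
      rw [h1]
  rw [hdiag, hswap, hlower]
  ring


set_option maxHeartbeats 1000000 in
/-- Properties of the minimum-resolution (KPM "Jackson") coefficients:
g₀ = 1, g₁ = cos(π/(r+2)) (so σ_r² = g₀ − g₁ = 1 − cos(π/(r+2))), and the associated
Chebyshev kernel is nonnegative on [−1,1]². -/
theorem KPM_kernel_properties (r : ℕ) (g : ℕ → ℝ)
    (hg : ∀ k, g k = (((r : ℝ) - k + 2) * Real.cos (π * k / (r + 2))
      + Real.sin (π * k / (r + 2)) * Real.cot (π / (r + 2))) / (r + 2)) :
    g 0 = 1 ∧ g 1 = Real.cos (π / (r + 2)) ∧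
      g 0 - g 1 = 1 - Real.cos (π / (r + 2)) ∧
      ∀ x ∈ Set.Icc (-1 : ℝ) 1, ∀ y ∈ Set.Icc (-1 : ℝ) 1,
        0 ≤ 1 + 2 * ∑ k ∈ Finset.Icc 1 r, g k * T1 k x * T1 k y := by
  have hN : (0:ℝ) < (r:ℝ) + 2 := by positivity
  set s : ℝ := π / ((r:ℝ) + 2) with hs_def
  have hs0 : 0 < s := by positivity
  have hslt : s < π := by
    rw [hs_def]
    exact div_lt_self Real.pi_pos (by linarith [Nat.cast_nonneg (α := ℝ) r])
  have hsin : 0 < Real.sin s := Real.sin_pos_of_pos_of_lt_pi hs0 hslt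
  have hNs : ((r:ℝ) + 2) * s = π := by
    rw [hs_def]; field_simp
  have hg0 : g 0 = 1 := by
    rw [hg 0]
    push_cast
    rw [mul_zero, zero_div, Real.cos_zero, Real.sin_zero]
    field_simp
    ring
  have hg1 : g 1 = Real.cos s := by
    rw [hg 1, Real.cot_eq_cos_div_sin]
    push_cast
    rw [mul_one, ← hs_def]
    field_simp
    ring
  refine ⟨hg0, hg1, by rw [hg0, hg1], ?_⟩
  -- the coefficient sequence
  set bb : ℕ → ℝ := fun m => Real.sqrt (2 / ((r:ℝ) + 2)) * Real.sin (((m:ℝ) + 1) * s)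
    with hbb_def
  have hbb : ∀ m k : ℕ, bb m * bb (m + k)
      = (2 / ((r:ℝ) + 2)) * (Real.sin (((m:ℝ)+1)*s) * Real.sin (((m:ℝ)+1+(k:ℝ))*s)) := by
    intro m k
    simp only [hbb_def]
    rw [show (((m+k:ℕ):ℝ) + 1) * s = ((m:ℝ)+1+(k:ℝ))*s by push_cast; ring]
    rw [show Real.sqrt (2/((r:ℝ)+2)) * Real.sin (((m:ℝ)+1)*s)
        * (Real.sqrt (2/((r:ℝ)+2)) * Real.sin (((m:ℝ)+1+(k:ℝ))*s))
      = (Real.sqrt (2/((r:ℝ)+2)) * Real.sqrt (2/((r:ℝ)+2)))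
        * (Real.sin (((m:ℝ)+1)*s) * Real.sin (((m:ℝ)+1+(k:ℝ))*s)) by ring]
    rw [Real.mul_self_sqrt (by positivity)]
  have hauto : ∀ k : ℕ, k ≤ r →
      ∑ m ∈ Finset.range (r + 1 - k), bb m * bb (m + k) = g k := by
    intro k hk
    have hM : ((r + 1 - k : ℕ) : ℝ) = (r:ℝ) + 1 - (k:ℝ) := by
      have : (r + 1 - k : ℕ) + k = r + 1 := by omega
      have := congrArg (Nat.cast : ℕ → ℝ) this
      push_cast at this
      linarith
    have hp := prodsum s (k:ℝ) (r + 1 - k)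
    rw [hM] at hp
    rw [← Finset.mul_sum] at hp
    have h2pi : Real.sin ((2 * ((r:ℝ) + 1 - (k:ℝ)) + (k:ℝ) + 1) * s)
        = - Real.sin (((k:ℝ) + 1) * s) := by
      rw [show (2 * ((r:ℝ) + 1 - (k:ℝ)) + (k:ℝ) + 1) * s
          = 2 * (((r:ℝ) + 2) * s) - ((k:ℝ)+1)*s by ring, hNs]
      rw [show 2 * π - ((k:ℝ)+1)*s = 2 * π - (((k:ℝ)+1)*s) by ring]
      exact Real.sin_two_pi_sub _
    rw [h2pi] at hp
    have hS : ∑ m ∈ Finset.range (r + 1 - k),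
        Real.sin (((m:ℝ)+1)*s) * Real.sin (((m:ℝ)+1+(k:ℝ))*s)
        = (2 * ((r:ℝ)+1-(k:ℝ)) * Real.sin s * Real.cos ((k:ℝ)*s)
            + 2 * Real.sin (((k:ℝ)+1)*s)) / (4 * Real.sin s) := by
      rw [eq_div_iff (by positivity)]
      linear_combination hp
    calc ∑ m ∈ Finset.range (r + 1 - k), bb m * bb (m + k)
        = (2 / ((r:ℝ)+2)) * ∑ m ∈ Finset.range (r + 1 - k),
            Real.sin (((m:ℝ)+1)*s) * Real.sin (((m:ℝ)+1+(k:ℝ))*s) := by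
          rw [Finset.mul_sum]
          exact Finset.sum_congr rfl fun m _ => hbb m k
      _ = g k := by
          rw [hS, hg k, Real.cot_eq_cos_div_sin,
            show π * (k:ℝ) / ((r:ℝ)+2) = (k:ℝ) * s by rw [hs_def]; ring,
            show ((k:ℝ)+1)*s = (k:ℝ)*s + s by ring, Real.sin_add]
          field_simp
          ring
  have h0 : ∑ m ∈ Finset.range (r + 1), (bb m)^2 = 1 := by
    calc ∑ m ∈ Finset.range (r + 1), (bb m)^2
        = ∑ m ∈ Finset.range (r + 1 - 0), bb m * bb (m + 0) := by
          simp [pow_two]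
      _ = g 0 := hauto 0 (Nat.zero_le r)
      _ = 1 := hg0
  have key : ∀ t : ℝ, 0 ≤ 1 + 2 * ∑ k ∈ Finset.Icc 1 r, g k * Real.cos ((k:ℝ) * t) := by
    intro t
    have h := sq_expand (r + 1) bb t
    simp only [Nat.add_sub_cancel] at h
    have hsum : ∑ k ∈ Finset.Icc 1 r,
        (∑ m ∈ Finset.range (r + 1 - k), bb m * bb (m + k)) * Real.cos ((k:ℝ)*t)
        = ∑ k ∈ Finset.Icc 1 r, g k * Real.cos ((k:ℝ)*t) := by
      refine Finset.sum_congr rfl fun k hk => ?_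
      rw [hauto k (Finset.mem_Icc.mp hk).2]
    rw [hsum, h0] at h
    have hnn := add_nonneg
      (sq_nonneg (∑ m ∈ Finset.range (r+1), bb m * Real.cos ((m:ℝ)*t)))
      (sq_nonneg (∑ m ∈ Finset.range (r+1), bb m * Real.sin ((m:ℝ)*t)))
    linarith [h, hnn]
  intro x hx y hy
  have hTx : ∀ k : ℕ, T1 k x = Real.cos ((k:ℝ) * Real.arccos x) := by
    intro k
    show (Polynomial.Chebyshev.T ℝ (k:ℤ)).eval x = _
    conv_lhs => rw [← Real.cos_arccos hx.1 hx.2]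
    rw [Polynomial.Chebyshev.T_real_cos]
    norm_num
  have hTy : ∀ k : ℕ, T1 k y = Real.cos ((k:ℝ) * Real.arccos y) := by
    intro k
    show (Polynomial.Chebyshev.T ℝ (k:ℤ)).eval y = _
    conv_lhs => rw [← Real.cos_arccos hy.1 hy.2]
    rw [Polynomial.Chebyshev.T_real_cos]
    norm_num
  set θ := Real.arccos x
  set φ := Real.arccos y
  have k1 := key (θ - φ)
  have k2 := key (θ + φ)
  have hcomb : ∑ k ∈ Finset.Icc 1 r, g k * Real.cos ((k:ℝ)*(θ - φ))
      + ∑ k ∈ Finset.Icc 1 r, g k * Real.cos ((k:ℝ)*(θ + φ))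
      = 2 * ∑ k ∈ Finset.Icc 1 r, g k * Real.cos ((k:ℝ)*θ) * Real.cos ((k:ℝ)*φ) := by
    rw [← Finset.sum_add_distrib, Finset.mul_sum]
    refine Finset.sum_congr rfl fun k _ => ?_
    rw [show (k:ℝ)*(θ - φ) = (k:ℝ)*θ - (k:ℝ)*φ by ring,
      show (k:ℝ)*(θ + φ) = (k:ℝ)*θ + (k:ℝ)*φ by ring,
      Real.cos_sub, Real.cos_add]
    ring
  simp only [hTx, hTy]
  linarith
end
end

section
/- Let g_α, α ∈ ℕ^n_r, be real numbers and suppose the trigonometric polynomial Φ(φ) = 1 + Σ_{α ∈ ℕ^n_r, α ≠ 0} 2^{H(α)} g_α ∏_{i=1}^n cos(α_i φ_i) satisfies Φ(φ) ≥ 0 for all φ ∈ ℝ^n. Then the polynomial kernel K(x,y) = 1 + Σ_{α ∈ ℕ^n_r, α ≠ 0} 2^{H(α)} g_α T_α(x) T_α(y) satisfies K(x,y) ≥ 0 for all x, y ∈ [−1,1]^n. -/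
open MeasureTheory Real Finset

noncomputable section

lemma cos_cos_aux' (a : ℕ) (θ ψ : ℝ) :
    Real.cos (a * θ) * Real.cos (a * ψ)
      = ∑ b : Bool, (1/2 : ℝ) * Real.cos (a * (θ + (if b then 1 else -1) * ψ)) := by
  rw [Fintype.sum_bool]
  simp only [Bool.false_eq_true, if_true, if_false]
  rw [show (a:ℝ)*(θ+1*ψ) = a*θ + a*ψ by ring, show (a:ℝ)*(θ + -1*ψ) = a*θ - a*ψ by ring,
    Real.cos_add, Real.cos_sub]
  ring

lemma prod_cos_cos' (n : ℕ) (α : Fin n → ℕ) (θ ψ : Fin n → ℝ) :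
    (∏ i, Real.cos (α i * θ i)) * ∏ i, Real.cos (α i * ψ i)
      = ((2:ℝ)^n)⁻¹ * ∑ ε : Fin n → Bool,
          ∏ i, Real.cos (α i * (θ i + (if ε i then 1 else -1) * ψ i)) := by
  rw [← Finset.prod_mul_distrib]
  simp_rw [cos_cos_aux']
  rw [Fintype.prod_sum]
  rw [Finset.mul_sum]
  refine Finset.sum_congr rfl fun ε _ => ?_
  rw [Finset.prod_mul_distrib, Finset.prod_const]
  simp [one_div, inv_pow]

lemma kernel_aux' (n : ℕ) (g : (Fin n → ℕ) → ℝ) (A : Finset (Fin n → ℕ))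
    (hm : (Fin n → ℕ) → ℕ)
    (hΦ : ∀ φ : Fin n → ℝ,
      0 ≤ 1 + ∑ α ∈ A, (2 : ℝ) ^ hm α * g α * ∏ i, Real.cos (α i * φ i)) :
    ∀ x ∈ box n, ∀ y ∈ box n,
      0 ≤ 1 + ∑ α ∈ A,
        (2 : ℝ) ^ hm α * g α * (∏ i, T1 (α i) (x i)) * ∏ i, T1 (α i) (y i) := by
  intro x hx y hy
  set θ : Fin n → ℝ := fun i => Real.arccos (x i) with hθ
  set ψ : Fin n → ℝ := fun i => Real.arccos (y i) with hψ
  have hxθ : ∀ i, x i = Real.cos (θ i) := fun i => by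
    have := hx i (Set.mem_univ i)
    rw [hθ, Real.cos_arccos this.1 this.2]
  have hyψ : ∀ i, y i = Real.cos (ψ i) := fun i => by
    have := hy i (Set.mem_univ i)
    rw [hψ, Real.cos_arccos this.1 this.2]
  have hTx : ∀ α : Fin n → ℕ, ∀ i, T1 (α i) (x i) = Real.cos (α i * θ i) := by
    intro α i
    rw [hxθ i, T1, Polynomial.Chebyshev.T_real_cos]
    norm_num
  have hTy : ∀ α : Fin n → ℕ, ∀ i, T1 (α i) (y i) = Real.cos (α i * ψ i) := by
    intro α i
    rw [hyψ i, T1, Polynomial.Chebyshev.T_real_cos]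
    norm_num
  have key : 1 + ∑ α ∈ A,
        (2 : ℝ) ^ hm α * g α * (∏ i, T1 (α i) (x i)) * ∏ i, T1 (α i) (y i)
      = ((2:ℝ)^n)⁻¹ * ∑ ε : Fin n → Bool,
          (1 + ∑ α ∈ A, (2 : ℝ) ^ hm α * g α *
            ∏ i, Real.cos (α i * (θ i + (if ε i then 1 else -1) * ψ i))) := by
    rw [Finset.sum_add_distrib, Finset.sum_const, Finset.card_univ]
    have hcard : (Fintype.card (Fin n → Bool) : ℝ) = 2^n := by
      simp [Fintype.card_fun]
    rw [mul_add, nsmul_eq_mul, hcard, mul_one, inv_mul_cancel₀ (by positivity)]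
    congr 1
    rw [Finset.sum_comm, Finset.mul_sum]
    refine Finset.sum_congr rfl fun α _ => ?_
    simp_rw [hTx α, hTy α]
    rw [mul_assoc, prod_cos_cos', ← Finset.mul_sum]
    ring
  rw [key]
  have h2 : (0:ℝ) ≤ ((2:ℝ)^n)⁻¹ := by positivity
  exact mul_nonneg h2 (Finset.sum_nonneg fun ε _ => hΦ _)

/-- If the trigonometric polynomial
1 + Σ_{α≠0} 2^{H(α)} g_α ∏ᵢ cos(αᵢφᵢ) is nonnegative on ℝⁿ, then the Chebyshev kernel
1 + Σ_{α≠0} 2^{H(α)} g_α T_α(x)T_α(y) is nonnegative on [−1,1]ⁿ × [−1,1]ⁿ. -/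
theorem trig_nonneg_implies_kernel_nonneg (n r : ℕ) (g : (Fin n → ℕ) → ℝ)
    (hΦ : ∀ φ : Fin n → ℝ,
      0 ≤ 1 + ∑ α ∈ (Nnr n r).erase 0,
        (2 : ℝ) ^ ham α * g α * ∏ i, Real.cos (α i * φ i)) :
    ∀ x ∈ box n, ∀ y ∈ box n,
      0 ≤ 1 + ∑ α ∈ (Nnr n r).erase 0,
        (2 : ℝ) ^ ham α * g α * Tm α x * Tm α y := by
  intro x hx y hy
  simpa [Tm] using kernel_aux' n g ((Nnr n r).erase 0) ham hΦ x hx y hy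
end
end

section
/- Let r ≥ 1, let μ be the product Chebyshev measure on [−1,1]^n, and let K_r(x,y) = Σ_{α ∈ ℕ^n_r} 2^{H(α)} g_α T_α(x) T_α(y) with real coefficients g_α and g_0 = 1 (the coefficient of α = 0). Then ∫_{[−1,1]^n} K_r(x,y) dμ(y) = 1 for every x, and the squared resolution satisfies ∫_{[−1,1]^n × [−1,1]^n} ‖x−y‖² K_r(x,y) dμ(x) dμ(y) = Σ_{i=1}^n (1 − g_{e_i}), where e_i is the i-th standard unit vector. -/
open MeasureTheory Real Finset
open scoped ENNReal NNReal

noncomputable section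

lemma cos_image_Ioo : Real.cos '' Set.Ioo 0 π = Set.Ioo (-1 : ℝ) 1 := by
  ext y
  constructor
  · rintro ⟨θ, hθ, rfl⟩
    obtain ⟨h0, hπ⟩ := hθ
    constructor
    · have := Real.strictAntiOn_cos (Set.mem_Icc.2 ⟨le_of_lt h0, le_of_lt hπ⟩)
        (Set.mem_Icc.2 ⟨le_of_lt (lt_trans h0 hπ), le_refl π⟩) hπ
      simpa [Real.cos_pi] using this
    · have := Real.strictAntiOn_cos (Set.mem_Icc.2 ⟨le_refl 0, le_of_lt (lt_trans h0 hπ)⟩)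
        (Set.mem_Icc.2 ⟨le_of_lt h0, le_of_lt hπ⟩) h0
      simpa [Real.cos_zero] using this
  · rintro ⟨h1, h2⟩
    refine ⟨Real.arccos y, ⟨(Real.arccos_pos).2 h2, ?_⟩,
      Real.cos_arccos (le_of_lt h1) (le_of_lt h2)⟩
    refine lt_of_le_of_ne (Real.arccos_le_pi y) fun h => ?_
    rw [Real.arccos_eq_pi] at h
    linarith

lemma rho_cos_eq {θ : ℝ} (hθ : θ ∈ Set.Ioo 0 π) :
    Real.sin θ * (π * Real.sqrt (1 - Real.cos θ ^ 2))⁻¹ = π⁻¹ := by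
  have hs : 0 < Real.sin θ := Real.sin_pos_of_pos_of_lt_pi hθ.1 hθ.2
  have h1 : 1 - Real.cos θ ^ 2 = Real.sin θ ^ 2 := by
    have := Real.sin_sq_add_cos_sq θ; linarith
  rw [h1, Real.sqrt_sq hs.le]
  field_simp

lemma cheb_substitution (g : ℝ → ℝ) :
    ∫ x, g x ∂chebMeasure1 = ∫ θ in Set.Ioo 0 π, g (Real.cos θ) / π := by
  have hmeas : Measurable fun x : ℝ => ((π * Real.sqrt (1 - x ^ 2))⁻¹).toNNReal :=
    ((measurable_const.mul ((measurable_const.sub (measurable_id.pow_const 2)).sqrt)).inv).real_toNNReal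
  have h1 : ∫ x, g x ∂chebMeasure1
      = ∫ x in Set.Icc (-1 : ℝ) 1, ((π * Real.sqrt (1 - x ^ 2))⁻¹) * g x := by
    rw [chebMeasure1]
    have : (fun x : ℝ => ENNReal.ofReal ((π * Real.sqrt (1 - x ^ 2))⁻¹))
        = fun x : ℝ => ((((π * Real.sqrt (1 - x ^ 2))⁻¹).toNNReal : NNReal) : ENNReal) := rfl
    rw [this, integral_withDensity_eq_integral_smul hmeas]
    refine setIntegral_congr_fun measurableSet_Icc fun x _ => ?_
    have hnn : 0 ≤ (π * Real.sqrt (1 - x ^ 2))⁻¹ :=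
      inv_nonneg.2 (mul_nonneg Real.pi_pos.le (Real.sqrt_nonneg _))
    simp only [NNReal.smul_def, Real.coe_toNNReal _ hnn, smul_eq_mul]
  have h2 : ∫ x in Set.Icc (-1 : ℝ) 1, ((π * Real.sqrt (1 - x ^ 2))⁻¹) * g x
      = ∫ x in Set.Ioo (-1 : ℝ) 1, ((π * Real.sqrt (1 - x ^ 2))⁻¹) * g x := by
    rw [integral_Icc_eq_integral_Ioo]
  have h3 : ∫ x in Set.Ioo (-1 : ℝ) 1, ((π * Real.sqrt (1 - x ^ 2))⁻¹) * g x
      = ∫ θ in Set.Ioo 0 π, |(-Real.sin θ)| •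
          (((π * Real.sqrt (1 - Real.cos θ ^ 2))⁻¹) * g (Real.cos θ)) := by
    rw [← cos_image_Ioo]
    exact integral_image_eq_integral_abs_deriv_smul measurableSet_Ioo
      (fun x _ => (Real.hasDerivAt_cos x).hasDerivWithinAt)
      (Real.injOn_cos.mono Set.Ioo_subset_Icc_self) _
  rw [h1, h2, h3]
  refine setIntegral_congr_fun measurableSet_Ioo fun θ hθ => ?_
  have hs : 0 < Real.sin θ := Real.sin_pos_of_pos_of_lt_pi hθ.1 hθ.2
  rw [abs_neg, abs_of_pos hs, smul_eq_mul, ← mul_assoc, rho_cos_eq hθ]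
  ring

lemma chebMeasure1_univ : chebMeasure1 Set.univ = 1 := by
  rw [chebMeasure1, withDensity_apply _ MeasurableSet.univ, Measure.restrict_univ]
  have hIoo : ∫⁻ x in Set.Icc (-1 : ℝ) 1, ENNReal.ofReal ((π * Real.sqrt (1 - x ^ 2))⁻¹)
      = ∫⁻ x in Set.Ioo (-1 : ℝ) 1, ENNReal.ofReal ((π * Real.sqrt (1 - x ^ 2))⁻¹) := by
    rw [Measure.restrict_congr_set Ioo_ae_eq_Icc]
  rw [hIoo, ← cos_image_Ioo]
  have h := lintegral_image_eq_lintegral_abs_det_fderiv_mul volume measurableSet_Ioo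
    (fun x _ => ((Real.hasDerivAt_cos x).hasDerivWithinAt).hasFDerivWithinAt)
    (Real.injOn_cos.mono Set.Ioo_subset_Icc_self)
    (fun x => ENNReal.ofReal ((π * Real.sqrt (1 - x ^ 2))⁻¹))
  simp only [ContinuousLinearMap.det_toSpanSingleton] at h
  rw [h]
  have : ∀ θ ∈ Set.Ioo (0:ℝ) π,
      ENNReal.ofReal |(-Real.sin θ)| *
        ENNReal.ofReal ((π * Real.sqrt (1 - Real.cos θ ^ 2))⁻¹) = ENNReal.ofReal π⁻¹ := by
    intro θ hθ
    have hs : 0 < Real.sin θ := Real.sin_pos_of_pos_of_lt_pi hθ.1 hθ.2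
    rw [abs_neg, abs_of_pos hs, ← ENNReal.ofReal_mul hs.le, rho_cos_eq hθ]
  rw [setLIntegral_congr_fun measurableSet_Ioo this,
    setLIntegral_const, Real.volume_Ioo]
  rw [← ENNReal.ofReal_mul (by positivity), sub_zero, inv_mul_cancel₀ Real.pi_ne_zero,
    ENNReal.ofReal_one]

instance : IsProbabilityMeasure chebMeasure1 := ⟨chebMeasure1_univ⟩

instance (n : ℕ) : IsProbabilityMeasure (chebMeasure n) := by
  rw [chebMeasure]; infer_instance

lemma pi_prod {n : ℕ} (f : Fin n → ℝ → ℝ) :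
    ∫ x, ∏ i, f i (x i) ∂(chebMeasure n) = ∏ i, ∫ t, f i t ∂chebMeasure1 := by
  letI : MeasureSpace ℝ := ⟨chebMeasure1⟩
  haveI : SigmaFinite (volume : Measure ℝ) := by
    show SigmaFinite chebMeasure1; infer_instance
  have h := MeasureTheory.integral_fin_nat_prod_eq_prod (E := fun _ : Fin n => ℝ) (μ := fun _ => chebMeasure1) f
  have hvol : (volume : Measure (Fin n → ℝ)) = chebMeasure n := by
    rw [MeasureTheory.volume_pi, chebMeasure]; rfl
  rw [chebMeasure]
  exact h

lemma chebMeasure1_Icc_compl : chebMeasure1 (Set.Icc (-1 : ℝ) 1)ᶜ = 0 := by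
  rw [chebMeasure1, withDensity_apply _ measurableSet_Icc.compl,
    Measure.restrict_restrict measurableSet_Icc.compl, Set.compl_inter_self,
    Measure.restrict_empty, lintegral_zero_measure]

lemma chebMeasure1_Icc : chebMeasure1 (Set.Icc (-1 : ℝ) 1) = 1 := by
  have h := measure_add_measure_compl (μ := chebMeasure1) (s := Set.Icc (-1:ℝ) 1) measurableSet_Icc
  rw [chebMeasure1_Icc_compl, add_zero, measure_univ] at h
  exact h

lemma chebMeasure_box_compl (n : ℕ) : chebMeasure n (_root_.box n)ᶜ = 0 := by
  have hbox : chebMeasure n (_root_.box n) = 1 := by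
    rw [chebMeasure, _root_.box, Measure.pi_pi]
    simp [chebMeasure1_Icc]
  have h := measure_add_measure_compl (μ := chebMeasure n) (s := _root_.box n)
    (MeasurableSet.univ_pi fun _ => measurableSet_Icc)
  rw [hbox, measure_univ] at h
  have h2 : (1:ℝ≥0∞) + chebMeasure n (_root_.box n)ᶜ = 1 + 0 := by rw [add_zero]; exact h
  exact (ENNReal.add_right_inj ENNReal.one_ne_top).mp h2

lemma ae_mem_box (n : ℕ) : ∀ᵐ x ∂chebMeasure n, x ∈ _root_.box n :=
  mem_ae_iff.mpr (chebMeasure_box_compl n)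

lemma cont_integrable {n : ℕ} {f : (Fin n → ℝ) → ℝ} (hf : Continuous f) :
    Integrable f (chebMeasure n) := by
  have hcompact : IsCompact (_root_.box n) := isCompact_univ_pi fun _ => isCompact_Icc
  obtain ⟨C, hC⟩ := hcompact.exists_bound_of_continuousOn hf.continuousOn
  refine Integrable.mono' (integrable_const C) hf.aestronglyMeasurable ?_
  filter_upwards [ae_mem_box n] with x hx
  exact hC x hx

lemma ae_mem_Icc1 : ∀ᵐ x ∂chebMeasure1, x ∈ Set.Icc (-1 : ℝ) 1 :=
  mem_ae_iff.mpr chebMeasure1_Icc_compl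

lemma cont_integrable1 {f : ℝ → ℝ} (hf : Continuous f) : Integrable f chebMeasure1 := by
  obtain ⟨C, hC⟩ := isCompact_Icc.exists_bound_of_continuousOn hf.continuousOn
  refine Integrable.mono' (integrable_const C) hf.aestronglyMeasurable ?_
  filter_upwards [ae_mem_Icc1] with x hx
  exact hC x hx

lemma Ioo_to_interval (f : ℝ → ℝ) :
    ∫ θ in Set.Ioo 0 π, f θ = ∫ θ in (0:ℝ)..π, f θ := by
  rw [intervalIntegral.integral_of_le Real.pi_pos.le, ← integral_Ioc_eq_integral_Ioo]

lemma icos (c : ℤ) : ∫ θ in (0:ℝ)..π, Real.cos (c * θ) = if c = 0 then π else 0 := by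
  by_cases hc : c = 0
  · simp [hc]
  · have hc' : (c : ℝ) ≠ 0 := Int.cast_ne_zero.2 hc
    rw [if_neg hc]
    have h := intervalIntegral.mul_integral_comp_mul_left (a := (0:ℝ)) (b := π)
      (c := (c:ℝ)) (f := Real.cos)
    rw [integral_cos] at h
    have h2 : Real.sin (c * π) - Real.sin ((c:ℝ) * 0) = 0 := by
      rw [Real.sin_int_mul_pi, mul_zero, Real.sin_zero, sub_zero]
    rw [h2] at h
    rcases mul_eq_zero.mp h with h | h
    · exact absurd h hc'
    · exact h

lemma T1_cos (k : ℕ) (θ : ℝ) : T1 k (Real.cos θ) = Real.cos (k * θ) := by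
  rw [T1, Polynomial.Chebyshev.T_real_cos]
  norm_num

lemma T1_continuous (k : ℕ) : Continuous (T1 k) := by
  exact (Polynomial.Chebyshev.T ℝ (k : ℤ)).continuous

lemma T1_one : ∀ x, T1 1 x = x := by
  intro x; simp [T1, Polynomial.Chebyshev.T_one]

lemma T1_zero : ∀ x, T1 0 x = 1 := by
  intro x; simp [T1, Polynomial.Chebyshev.T_zero]

/-- orthogonality integrals -/
lemma I1_eval (k : ℕ) : ∫ x, T1 k x ∂chebMeasure1 = if k = 0 then 1 else 0 := by
  rw [cheb_substitution, Ioo_to_interval]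
  have : ∀ θ : ℝ, T1 k (Real.cos θ) / π = Real.cos ((k:ℤ) * θ) * π⁻¹ := by
    intro θ; rw [T1_cos]; push_cast; ring
  simp_rw [this]
  rw [intervalIntegral.integral_mul_const, icos]
  by_cases hk : k = 0
  · simp [hk, mul_inv_cancel₀ Real.pi_ne_zero]
  · simp [hk, Int.natCast_eq_zero.not.2 hk]

lemma I2_eval (j k : ℕ) : ∫ x, T1 j x * T1 k x ∂chebMeasure1
    = if j = k then (if k = 0 then 1 else 1/2) else 0 := by
  rw [cheb_substitution, Ioo_to_interval]
  have key : ∀ θ : ℝ, T1 j (Real.cos θ) * T1 k (Real.cos θ) / π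
      = (Real.cos ((((j:ℤ) - k) : ℝ) * θ) + Real.cos ((((j:ℤ) + k) : ℝ) * θ)) * (2*π)⁻¹ := by
    intro θ
    rw [T1_cos, T1_cos]
    have h2 := Real.two_mul_cos_mul_cos ((j:ℝ)*θ) ((k:ℝ)*θ)
    push_cast
    rw [← sub_mul, ← add_mul] at h2
    linear_combination h2 / (2*π)
  simp_rw [key]
  rw [intervalIntegral.integral_mul_const,
    intervalIntegral.integral_add
      (Continuous.intervalIntegrable (by fun_prop) _ _)
      (Continuous.intervalIntegrable (by fun_prop) _ _)]
  have e1 := icos ((j:ℤ) - k)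
  have e2 := icos ((j:ℤ) + k)
  push_cast at e1 e2 ⊢
  rw [e1, e2]
  by_cases hjk : j = k
  · subst hjk
    by_cases hj : j = 0
    · subst hj
      simp
      field_simp
      ring
    · have h1 : ((j:ℤ) - j) = 0 := by ring
      have h2 : ((j:ℤ) + j) ≠ 0 := by
        simp only [ne_eq, ← two_mul, mul_eq_zero]
        push_neg
        exact ⟨two_ne_zero, Int.natCast_ne_zero.2 hj⟩
      rw [if_pos h1, if_neg h2, if_pos rfl, if_neg hj, add_zero]
      field_simp
  · have h1 : ((j:ℤ) - k) ≠ 0 := by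
      simp only [ne_eq, sub_eq_zero]
      exact_mod_cast hjk
    have h2 : ((j:ℤ) + k) = 0 → False := by
      intro h
      have hj0 : (j:ℤ) = 0 := by omega
      have hk0 : (k:ℤ) = 0 := by omega
      exact hjk (by omega)
    rw [if_neg h1, if_neg h2, if_neg hjk, add_zero, zero_mul]

lemma J_eval (k : ℕ) : ∫ t, t * T1 k t ∂chebMeasure1 = if k = 1 then 1/2 else 0 := by
  have h : (fun t : ℝ => t * T1 k t) = fun t => T1 1 t * T1 k t := funext fun t => by
    rw [T1_one]
  rw [h, I2_eval]
  by_cases hk : k = 1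
  · simp [hk]
  · simp only [hk, if_false]
    rw [if_neg (fun h => hk h.symm)]

lemma int_one1 : ∫ t : ℝ, (1:ℝ) ∂chebMeasure1 = 1 := by simp

lemma Q_eval : ∫ t : ℝ, t^2 ∂chebMeasure1 = 1/2 := by
  have h : (fun t : ℝ => t^2) = fun t => T1 1 t * T1 1 t := funext fun t => by
    rw [T1_one]; ring
  rw [h, I2_eval]
  norm_num

lemma Tm_continuous {n : ℕ} (α : Fin n → ℕ) : Continuous (Tm α) := by
  unfold Tm
  exact continuous_finset_prod _ fun i _ => (T1_continuous (α i)).comp (continuous_apply i)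

lemma A_eval {n : ℕ} (α : Fin n → ℕ) :
    ∫ x, Tm α x ∂chebMeasure n = if α = 0 then 1 else 0 := by
  have h : (fun x => Tm α x) = fun x : Fin n → ℝ => ∏ i, T1 (α i) (x i) := rfl
  rw [h, pi_prod]
  simp_rw [I1_eval]
  rw [Finset.prod_boole]
  congr 1
  simp [funext_iff]

lemma single_iff {n : ℕ} (i : Fin n) (α : Fin n → ℕ) :
    α = Pi.single i 1 ↔ (α i = 1 ∧ ∀ j, j ≠ i → α j = 0) := by
  constructor
  · rintro rfl
    exact ⟨by simp, fun j hj => by simp [Pi.single_apply, hj]⟩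
  · rintro ⟨h1, h2⟩
    funext j
    by_cases hj : j = i
    · subst hj; simp [h1]
    · simp [Pi.single_apply, hj, h2 j hj]

lemma B_eval {n : ℕ} (i : Fin n) (α : Fin n → ℕ) :
    ∫ x, x i * Tm α x ∂chebMeasure n = if α = Pi.single i 1 then 1/2 else 0 := by
  set f : Fin n → ℝ → ℝ := fun j t => if j = i then t * T1 (α j) t else T1 (α j) t with hf
  have h : (fun x : Fin n → ℝ => x i * Tm α x) = fun x => ∏ j, f j (x j) := by
    funext x
    rw [Tm, ← Finset.mul_prod_erase univ (fun j => f j (x j)) (Finset.mem_univ i),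
      ← Finset.mul_prod_erase univ (fun j => T1 (α j) (x j)) (Finset.mem_univ i)]
    have hprod : ∏ j ∈ univ.erase i, f j (x j) = ∏ j ∈ univ.erase i, T1 (α j) (x j) :=
      Finset.prod_congr rfl fun j hj => by simp [hf, (Finset.mem_erase.mp hj).1]
    rw [hprod]
    simp only [hf, if_pos rfl]
    ring
  rw [h, pi_prod, ← Finset.mul_prod_erase univ (fun j => ∫ t, f j t ∂chebMeasure1)
    (Finset.mem_univ i)]
  have hi : ∫ t, f i t ∂chebMeasure1 = if α i = 1 then 1/2 else 0 := by
    simp only [hf, if_pos rfl]; exact J_eval (α i)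
  have hj : ∀ j ∈ univ.erase i, (∫ t, f j t ∂chebMeasure1) = if α j = 0 then 1 else 0 := by
    intro j hjmem
    simp only [hf, if_neg (Finset.mem_erase.mp hjmem).1]
    exact I1_eval (α j)
  rw [hi, Finset.prod_congr rfl hj, Finset.prod_boole]
  by_cases hs : α = Pi.single i 1
  · obtain ⟨h1, h2⟩ := (single_iff i α).mp hs
    rw [if_pos hs, if_pos h1, if_pos]
    · norm_num
    · intro j hjm; exact h2 j (Finset.mem_erase.mp hjm).1
  · rw [if_neg hs]
    rcases Decidable.em (α i = 1) with h1 | h1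
    · rw [if_pos h1]
      have h2 : ¬ ∀ j ∈ univ.erase i, α j = 0 := by
        intro hall
        exact hs ((single_iff i α).mpr ⟨h1, fun j hjne =>
          hall j (Finset.mem_erase.mpr ⟨hjne, Finset.mem_univ j⟩)⟩)
      rw [if_neg h2, mul_zero]
    · rw [if_neg h1, zero_mul]

lemma C_eval {n : ℕ} (i : Fin n) : ∫ x, (x i)^2 ∂chebMeasure n = 1/2 := by
  set f : Fin n → ℝ → ℝ := fun j t => if j = i then t^2 else 1 with hf
  have h : (fun x : Fin n → ℝ => (x i)^2) = fun x => ∏ j, f j (x j) := by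
    funext x
    rw [← Finset.mul_prod_erase univ (fun j => f j (x j)) (Finset.mem_univ i)]
    have h1 : ∏ j ∈ univ.erase i, f j (x j) = 1 := Finset.prod_eq_one fun j hj => by
      simp [hf, (Finset.mem_erase.mp hj).1]
    rw [h1, mul_one]
    simp [hf]
  rw [h, pi_prod, ← Finset.mul_prod_erase univ (fun j => ∫ t, f j t ∂chebMeasure1)
    (Finset.mem_univ i)]
  have hi : ∫ t, f i t ∂chebMeasure1 = 1/2 := by simp only [hf, if_pos rfl]; exact Q_eval
  have h2 : ∏ j ∈ univ.erase i, (∫ t, f j t ∂chebMeasure1) = 1 := Finset.prod_eq_one fun j hj => by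
    simp only [hf, if_neg (Finset.mem_erase.mp hj).1]; exact int_one1
  rw [hi, h2, mul_one]

lemma eNorm_sq {n : ℕ} (z : Fin n → ℝ) : eNorm z ^ 2 = ∑ i, z i ^ 2 :=
  Real.sq_sqrt (Finset.sum_nonneg fun i _ => sq_nonneg _)

lemma Tm_zero {n : ℕ} (x : Fin n → ℝ) : Tm (0 : Fin n → ℕ) x = 1 := by
  rw [Tm]
  exact Finset.prod_eq_one fun i _ => T1_zero (x i)

lemma ham_zero {n : ℕ} : ham (0 : Fin n → ℕ) = 0 := by simp [ham]

lemma ham_single {n : ℕ} (i : Fin n) : ham (Pi.single i 1 : Fin n → ℕ) = 1 := by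
  rw [ham]
  have h : (Finset.univ.filter fun j => (Pi.single i 1 : Fin n → ℕ) j ≠ 0) = {i} := by
    ext j
    simp [Pi.single_apply]
  rw [h, Finset.card_singleton]

lemma single_ne_zero' {n : ℕ} (i : Fin n) : (Pi.single i 1 : Fin n → ℕ) ≠ 0 := by
  intro h
  have := congrFun h i
  simp at this

lemma zero_mem_Nnr (n r : ℕ) : (0 : Fin n → ℕ) ∈ Nnr n r := by
  simp [Nnr, Fintype.mem_piFinset]

lemma single_mem_Nnr {n r : ℕ} (hr : 1 ≤ r) (i : Fin n) : (Pi.single i 1 : Fin n → ℕ) ∈ Nnr n r := by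
  rw [Nnr, Finset.mem_filter]
  constructor
  · rw [Fintype.mem_piFinset]
    intro j
    rw [Finset.mem_range, Pi.single_apply]
    split <;> omega
  · rw [Finset.sum_pi_single']
    simp [hr]

lemma C2_zero {n : ℕ} (i : Fin n) :
    ∫ y, (y i)^2 * Tm (0 : Fin n → ℕ) y ∂chebMeasure n = 1/2 := by
  simp_rw [Tm_zero, mul_one]
  exact C_eval i

/-- For a kernel with coefficients 2^{H(α)} g_α and g₀ = 1, the kernel
is normalized, and its squared resolution equals Σᵢ (1 − g_{eᵢ}). -/
theorem kernel_normalized_and_resolution (n r : ℕ) (hr : 1 ≤ r)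
    (g : (Fin n → ℕ) → ℝ) (hg0 : g 0 = 1)
    (K : (Fin n → ℝ) → (Fin n → ℝ) → ℝ)
    (hK : ∀ x y, K x y = ∑ α ∈ Nnr n r, (2 : ℝ) ^ ham α * g α * Tm α x * Tm α y) :
    (∀ x, ∫ y, K x y ∂(chebMeasure n) = 1) ∧
      ∫ x, ∫ y, eNorm (x - y) ^ 2 * K x y ∂(chebMeasure n) ∂(chebMeasure n) =
        ∑ i : Fin n, (1 - g (Pi.single i 1)) := by
  have hpart1 : ∀ x, ∫ y, K x y ∂chebMeasure n = 1 := by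
    intro x
    have hrw : (fun y => K x y)
        = fun y => ∑ α ∈ Nnr n r, (2 : ℝ) ^ ham α * g α * Tm α x * Tm α y := funext (hK x)
    rw [hrw, integral_finset_sum _
      (fun α _ => cont_integrable (f := fun y => (2 : ℝ) ^ ham α * g α * Tm α x * Tm α y)
        (continuous_const.mul (Tm_continuous α)))]
    have hterm : ∀ α ∈ Nnr n r,
        (∫ y, (2 : ℝ) ^ ham α * g α * Tm α x * Tm α y ∂chebMeasure n)
          = if α = 0 then (2 : ℝ) ^ ham α * g α * Tm α x else 0 := by
      intro α _
      rw [integral_const_mul, A_eval]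
      by_cases h0 : α = 0 <;> simp [h0]
    rw [Finset.sum_congr rfl hterm,
      Finset.sum_ite_eq' (Nnr n r) 0 (fun α => (2 : ℝ) ^ ham α * g α * Tm α x),
      if_pos (zero_mem_Nnr n r)]
    simp [ham_zero, hg0, Tm_zero]
  refine ⟨hpart1, ?_⟩
  -- pointwise rewrite of the inner integrand
  have hyident : ∀ x : Fin n → ℝ, (fun y => eNorm (x - y) ^ 2 * K x y)
      = fun y => ∑ i : Fin n, ∑ α ∈ Nnr n r,
          (2 : ℝ) ^ ham α * g α * Tm α x * ((x i - y i)^2 * Tm α y) := by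
    intro x
    funext y
    rw [hK, eNorm_sq, Finset.sum_mul]
    refine Finset.sum_congr rfl fun i _ => ?_
    rw [Finset.mul_sum]
    refine Finset.sum_congr rfl fun α _ => ?_
    simp only [Pi.sub_apply]
    ring
  have contiα : ∀ (x : Fin n → ℝ) (i : Fin n) (α : Fin n → ℕ),
      Continuous fun y : Fin n → ℝ =>
        (2 : ℝ) ^ ham α * g α * Tm α x * ((x i - y i)^2 * Tm α y) :=
    fun x i α => continuous_const.mul
      (((continuous_const.sub (continuous_apply i)).pow 2).mul (Tm_continuous α))
  have hinner : ∀ x : Fin n → ℝ,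
      ∫ y, eNorm (x - y) ^ 2 * K x y ∂chebMeasure n
        = ∑ i : Fin n, ∑ α ∈ Nnr n r, (2 : ℝ) ^ ham α * g α * Tm α x *
            ((x i)^2 * (if α = 0 then 1 else 0)
              - 2 * x i * (if α = Pi.single i 1 then 1/2 else 0)
              + ∫ y, (y i)^2 * Tm α y ∂chebMeasure n) := by
    intro x
    rw [hyident x, integral_finset_sum _ (fun i _ =>
      integrable_finset_sum _ (fun α _ => cont_integrable (contiα x i α)))]
    refine Finset.sum_congr rfl fun i _ => ?_
    rw [integral_finset_sum _ (fun α _ => cont_integrable (contiα x i α))]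
    refine Finset.sum_congr rfl fun α _ => ?_
    rw [integral_const_mul]
    congr 1
    have hsplit : (fun y : Fin n → ℝ => (x i - y i)^2 * Tm α y)
        = fun y => ((x i)^2 * Tm α y - 2 * x i * (y i * Tm α y)) + (y i)^2 * Tm α y := by
      funext y; ring
    have int1 : Integrable (fun y : Fin n → ℝ => (x i)^2 * Tm α y) (chebMeasure n) :=
      cont_integrable (continuous_const.mul (Tm_continuous α))
    have int2 : Integrable (fun y : Fin n → ℝ => 2 * x i * (y i * Tm α y)) (chebMeasure n) :=
      cont_integrable (continuous_const.mul ((continuous_apply i).mul (Tm_continuous α)))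
    have int3 : Integrable (fun y : Fin n → ℝ => (y i)^2 * Tm α y) (chebMeasure n) :=
      cont_integrable (((continuous_apply i).pow 2).mul (Tm_continuous α))
    have int12 : Integrable (fun y : Fin n → ℝ =>
        (x i)^2 * Tm α y - 2 * x i * (y i * Tm α y)) (chebMeasure n) := int1.sub int2
    rw [hsplit, integral_add int12 int3, integral_sub int1 int2,
      integral_const_mul, integral_const_mul, A_eval, B_eval]
  have hcongr : (fun x => ∫ y, eNorm (x - y) ^ 2 * K x y ∂chebMeasure n)
      = fun x => ∑ i : Fin n, ∑ α ∈ Nnr n r, (2 : ℝ) ^ ham α * g α * Tm α x *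
          ((x i)^2 * (if α = 0 then 1 else 0)
            - 2 * x i * (if α = Pi.single i 1 then 1/2 else 0)
            + ∫ y, (y i)^2 * Tm α y ∂chebMeasure n) := funext hinner
  rw [hcongr]
  have contxα : ∀ (i : Fin n) (α : Fin n → ℕ),
      Continuous fun x : Fin n → ℝ => (2 : ℝ) ^ ham α * g α * Tm α x *
          ((x i)^2 * (if α = 0 then 1 else 0)
            - 2 * x i * (if α = Pi.single i 1 then 1/2 else 0)
            + ∫ y, (y i)^2 * Tm α y ∂chebMeasure n) :=
    fun i α => (continuous_const.mul (Tm_continuous α)).mul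
      (((((continuous_apply i).pow 2).mul continuous_const).sub
        ((continuous_const.mul (continuous_apply i)).mul continuous_const)).add
        continuous_const)
  rw [integral_finset_sum _ (fun i _ =>
    integrable_finset_sum _ (fun α _ => cont_integrable (contxα i α)))]
  refine Finset.sum_congr rfl fun i _ => ?_
  rw [integral_finset_sum _ (fun α _ => cont_integrable (contxα i α))]
  have houter : ∀ α ∈ Nnr n r,
      (∫ x, (2 : ℝ) ^ ham α * g α * Tm α x *
          ((x i)^2 * (if α = 0 then 1 else 0)
            - 2 * x i * (if α = Pi.single i 1 then 1/2 else 0)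
            + ∫ y, (y i)^2 * Tm α y ∂chebMeasure n) ∂chebMeasure n)
        = (if α = 0 then (2 : ℝ) ^ ham α * g α * (2 * ∫ y, (y i)^2 * Tm α y ∂chebMeasure n)
            else 0)
          + (if α = Pi.single i 1 then (2 : ℝ) ^ ham α * g α * (-(1/2)) else 0) := by
    intro α _
    have hsplit2 : (fun x : Fin n → ℝ => (2 : ℝ) ^ ham α * g α * Tm α x *
          ((x i)^2 * (if α = 0 then 1 else 0)
            - 2 * x i * (if α = Pi.single i 1 then 1/2 else 0)
            + ∫ y, (y i)^2 * Tm α y ∂chebMeasure n))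
        = fun x => (2 : ℝ) ^ ham α * g α *
            (((if α = 0 then (1:ℝ) else 0) * ((x i)^2 * Tm α x)
              - 2 * (if α = Pi.single i 1 then 1/2 else 0) * (x i * Tm α x))
              + (∫ y, (y i)^2 * Tm α y ∂chebMeasure n) * Tm α x) := by
      funext x; ring
    have j1 : Integrable (fun x : Fin n → ℝ =>
        (if α = 0 then (1:ℝ) else 0) * ((x i)^2 * Tm α x)) (chebMeasure n) :=
      cont_integrable (continuous_const.mul (((continuous_apply i).pow 2).mul (Tm_continuous α)))
    have j2 : Integrable (fun x : Fin n → ℝ =>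
        2 * (if α = Pi.single i 1 then (1:ℝ)/2 else 0) * (x i * Tm α x)) (chebMeasure n) :=
      cont_integrable (continuous_const.mul ((continuous_apply i).mul (Tm_continuous α)))
    have j3 : Integrable (fun x : Fin n → ℝ =>
        (∫ y, (y i)^2 * Tm α y ∂chebMeasure n) * Tm α x) (chebMeasure n) :=
      cont_integrable (continuous_const.mul (Tm_continuous α))
    have j12 : Integrable (fun x : Fin n → ℝ =>
        (if α = 0 then (1:ℝ) else 0) * ((x i)^2 * Tm α x)
          - 2 * (if α = Pi.single i 1 then (1:ℝ)/2 else 0) * (x i * Tm α x)) (chebMeasure n) :=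
      j1.sub j2
    rw [hsplit2, integral_const_mul, integral_add j12 j3, integral_sub j1 j2,
      integral_const_mul, integral_const_mul, integral_const_mul, A_eval, B_eval]
    split_ifs with h0 h1 h1 <;> first
      | (exact absurd (h1.symm.trans h0) (single_ne_zero' i))
      | ring
  rw [Finset.sum_congr rfl houter, Finset.sum_add_distrib,
    Finset.sum_ite_eq' (Nnr n r) 0
      (fun α => (2 : ℝ) ^ ham α * g α * (2 * ∫ y, (y i)^2 * Tm α y ∂chebMeasure n)),
    Finset.sum_ite_eq' (Nnr n r) (Pi.single i 1)
      (fun α => (2 : ℝ) ^ ham α * g α * (-(1/2))),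
    if_pos (zero_mem_Nnr n r), if_pos (single_mem_Nnr hr i), C2_zero i,
    ham_zero, ham_single, hg0, pow_zero, pow_one]
  ring
end
end
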